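/- Let n ≥ 1 and m ≥ 1 be integers and let λ₁, …, λ_{m+1} be real numbers with 0 < λ₁ ≤ λ₂ ≤ … ≤ λ_m < λ_{m+1}. Write S = ∑_{i=1}^m λ_i and Q = ∑_{i=1}^m λ_i². If D := (1 + 2/n)² S² − m (1 + 4/n) Q ≥ 0 and λ_{m+1} ≤ (1/m)[(1 + 2/n) S + D^{1/2}], then λ_{m+1} ≤ (1 + 4/n) (1/m) ∑_{i=1}^m λ_i (Yang's second inequality). -/
import Mathlib


/-- Yang's explicit first-inequality bound (the larger root of the quadratic)
implies Yang's second inequality. -/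
theorem yang_explicit_implies_yang_second
    (n m : ℕ) (hn : 1 ≤ n) (hm : 1 ≤ m) (lam : ℕ → ℝ)
    (hpos : 0 < lam 1)
    (hmono : ∀ i, 1 ≤ i → i < m → lam i ≤ lam (i + 1))
    (hlt : lam m < lam (m + 1))
    (hD : (1 + 2 / (n : ℝ)) ^ 2 * (∑ i ∈ Finset.Icc 1 m, lam i) ^ 2 -
        (m : ℝ) * (1 + 4 / (n : ℝ)) * ∑ i ∈ Finset.Icc 1 m, (lam i) ^ 2 ≥ 0)
    (hbound : lam (m + 1) ≤ (1 / (m : ℝ)) *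
      ((1 + 2 / (n : ℝ)) * (∑ i ∈ Finset.Icc 1 m, lam i) +
        Real.sqrt ((1 + 2 / (n : ℝ)) ^ 2 * (∑ i ∈ Finset.Icc 1 m, lam i) ^ 2 -
          (m : ℝ) * (1 + 4 / (n : ℝ)) * ∑ i ∈ Finset.Icc 1 m, (lam i) ^ 2))) :
    lam (m + 1) ≤ (1 + 4 / (n : ℝ)) * (1 / (m : ℝ)) * ∑ i ∈ Finset.Icc 1 m, lam i := by
  set S := ∑ i ∈ Finset.Icc 1 m, lam i with hS
  set Q := ∑ i ∈ Finset.Icc 1 m, (lam i) ^ 2 with hQ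
  have hn0 : (0 : ℝ) < n := by exact_mod_cast hn
  have hm0 : (0 : ℝ) < m := by exact_mod_cast hm
  -- positivity of each term
  have hposall : ∀ i, 1 ≤ i → i ≤ m → 0 < lam i := by
    intro i h1 h2
    induction i with
    | zero => omega
    | succ k ih =>
      rcases Nat.eq_or_lt_of_le h1 with h | h
      · simpa [← h] using hpos
      · have hk1 : 1 ≤ k := by omega
        have hkm : k < m := by omega
        exact lt_of_lt_of_le (ih hk1 (by omega)) (hmono k hk1 hkm)
  have hSpos : 0 < S := by
    apply Finset.sum_pos
    · intro i hi
      simp only [Finset.mem_Icc] at hi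
      exact hposall i hi.1 hi.2
    · exact ⟨1, by simp [Finset.mem_Icc, hm]⟩
  -- Cauchy–Schwarz
  have hCS : S ^ 2 ≤ (m : ℝ) * Q := by
    have := sq_sum_le_card_mul_sum_sq (s := Finset.Icc 1 m) (f := lam)
    simpa [Nat.card_Icc, hm] using this
  -- sqrt bound
  have hDle : (1 + 2 / (n : ℝ)) ^ 2 * S ^ 2 - (m : ℝ) * (1 + 4 / (n : ℝ)) * Q
      ≤ ((2 / (n : ℝ)) * S) ^ 2 := by
    have h1 : (0 : ℝ) < 1 + 4 / (n : ℝ) := by positivity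
    have hid : (1 + 2 / (n : ℝ)) ^ 2 * S ^ 2 - ((2 / (n : ℝ)) * S) ^ 2
        = (1 + 4 / (n : ℝ)) * S ^ 2 := by
      field_simp
      ring
    have h2 := mul_le_mul_of_nonneg_left hCS h1.le
    nlinarith [h2, hid]
  have hsqrt : Real.sqrt ((1 + 2 / (n : ℝ)) ^ 2 * S ^ 2 - (m : ℝ) * (1 + 4 / (n : ℝ)) * Q)
      ≤ (2 / (n : ℝ)) * S := by
    have h2 : (0 : ℝ) ≤ (2 / (n : ℝ)) * S := by positivity
    calc Real.sqrt ((1 + 2 / (n : ℝ)) ^ 2 * S ^ 2 - (m : ℝ) * (1 + 4 / (n : ℝ)) * Q)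
        ≤ Real.sqrt (((2 / (n : ℝ)) * S) ^ 2) := Real.sqrt_le_sqrt hDle
      _ = (2 / (n : ℝ)) * S := Real.sqrt_sq h2
  have : lam (m + 1) ≤ (1 / (m : ℝ)) * ((1 + 2 / (n : ℝ)) * S + (2 / (n : ℝ)) * S) := by
    refine hbound.trans ?_
    have := mul_le_mul_of_nonneg_left (add_le_add_left hsqrt ((1 + 2 / (n : ℝ)) * S))
      (by positivity : (0:ℝ) ≤ 1 / (m : ℝ))
    linarith
  calc lam (m + 1) ≤ (1 / (m : ℝ)) * ((1 + 2 / (n : ℝ)) * S + (2 / (n : ℝ)) * S) := this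
    _ = (1 + 4 / (n : ℝ)) * (1 / (m : ℝ)) * S := by ring
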